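/- arXiv:1004.0323 — 5 statements merged into one kernel-verified Lean document; each statement's English description precedes it below -/
import Mathlib

section
/- Let X and Y be locally compact, σ-compact Hausdorff spaces and let f : X → Y be a function. Then f is continuous if and only if its graph {(x, f x) : x ∈ X} is a closed subset of X × Y and f(A) is compact for every compact subset A of X. -/
/-- For locally compact, σ-compact Hausdorff spaces `X`, `Y` and a function
`f : X → Y`, `f` is continuous iff its graph is closed in `X × Y` and `f` maps compact
sets to compact sets (i.e. the graph of `f` is a +proper relation). -/
theorem continuous_iff_graph_closed_and_mapsCompact
    {X Y : Type*} [TopologicalSpace X] [LocallyCompactSpace X]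
    [SigmaCompactSpace X] [T2Space X]
    [TopologicalSpace Y] [LocallyCompactSpace Y] [SigmaCompactSpace Y] [T2Space Y]
    (f : X → Y) :
    Continuous f ↔
      (IsClosed {p : X × Y | p.2 = f p.1} ∧
        ∀ A : Set X, IsCompact A → IsCompact (f '' A)) := by
  constructor
  · intro hf
    exact ⟨isClosed_eq continuous_snd (hf.comp continuous_fst),
      fun A hA => hA.image hf⟩
  · rintro ⟨hclosed, hcomp⟩
    rw [continuous_iff_continuousAt]
    intro x
    obtain ⟨K, hK, hKx⟩ := exists_compact_mem_nhds x
    have hG : IsCompact ((K ×ˢ (f '' K)) ∩ {p : X × Y | p.2 = f p.1}) :=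
      ((hK.prod (hcomp K hK)).inter_right hclosed)
    have hcont : ContinuousOn f K := by
      rw [continuousOn_iff_isClosed]
      intro C hC
      refine ⟨K ∩ f ⁻¹' C, ?_, ?_⟩
      · have : K ∩ f ⁻¹' C =
            Prod.fst '' ((K ×ˢ (f '' K)) ∩ {p : X × Y | p.2 = f p.1} ∩
              (Set.univ ×ˢ C)) := by
          ext a
          constructor
          · rintro ⟨haK, haC⟩
            exact ⟨(a, f a), ⟨⟨⟨haK, ⟨a, haK, rfl⟩⟩, rfl⟩, ⟨trivial, haC⟩⟩, rfl⟩
          · rintro ⟨⟨a', b⟩, ⟨⟨⟨haK, _⟩, hb⟩, ⟨_, hbC⟩⟩, rfl⟩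
            simp only [Set.mem_setOf_eq] at hb; exact ⟨haK, show f a' ∈ C from hb ▸ hbC⟩
        rw [this]
        exact ((hG.inter_right (isClosed_univ.prod hC)).image continuous_fst).isClosed
      · ext a; constructor
        · rintro ⟨haC, haK⟩; exact ⟨⟨haK, haC⟩, haK⟩
        · rintro ⟨⟨_, haC⟩, haK⟩; exact ⟨haC, haK⟩
    exact hcont.continuousAt hKx
end

section
/- Let f be a +proper closed relation on a locally compact, σ-compact Hausdorff space X. Then 𝒢f = f ∪ (𝒢f ∘ f). If moreover f is proper (both f and f⁻¹ are +proper), then also 𝒢f = f ∪ (f ∘ 𝒢f). -/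
/-- The image of a set `A` under a relation `f ⊆ X × Y`. -/
def relImage {X Y : Type*} (f : Set (X × Y)) (A : Set X) : Set Y :=
  {y | ∃ x ∈ A, (x, y) ∈ f}

/-- The reverse (inverse) relation of `f ⊆ X × Y`. -/
def relInv {X Y : Type*} (f : Set (X × Y)) : Set (Y × X) :=
  {p | (p.2, p.1) ∈ f}

/-- Composition of relations: `relComp g f = g ∘ f` (first `f`, then `g`). -/
def relComp {X Y Z : Type*} (g : Set (Y × Z)) (f : Set (X × Y)) : Set (X × Z) :=
  {p | ∃ y, (p.1, y) ∈ f ∧ (y, p.2) ∈ g}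

/-- A relation on `X` is transitive. -/
def RelTrans {X : Type*} (f : Set (X × X)) : Prop :=
  ∀ x y z : X, (x, y) ∈ f → (y, z) ∈ f → (x, z) ∈ f

/-- `gRel f` is the smallest closed transitive relation containing `f`:
the intersection of all closed transitive relations containing `f`. -/
def gRel {X : Type*} [TopologicalSpace X] (f : Set (X × X)) : Set (X × X) :=
  ⋂₀ {g : Set (X × X) | f ⊆ g ∧ IsClosed g ∧ RelTrans g}

open Filter Topology Set

lemma subset_gRel {X : Type*} [TopologicalSpace X] (f : Set (X × X)) : f ⊆ gRel f := by
  intro p hp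
  exact fun g hg => hg.1 hp

lemma isClosed_gRel {X : Type*} [TopologicalSpace X] (f : Set (X × X)) :
    IsClosed (gRel f) :=
  isClosed_sInter (fun g hg => hg.2.1)

lemma relTrans_gRel {X : Type*} [TopologicalSpace X] (f : Set (X × X)) :
    RelTrans (gRel f) := by
  intro x y z hxy hyz g hg
  exact hg.2.2 x y z (hxy g hg) (hyz g hg)

lemma gRel_min {X : Type*} [TopologicalSpace X] {f g : Set (X × X)}
    (h1 : f ⊆ g) (h2 : IsClosed g) (h3 : RelTrans g) : gRel f ⊆ g :=
  Set.sInter_subset_of_mem ⟨h1, h2, h3⟩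

lemma isClosed_relInv {X Y : Type*} [TopologicalSpace X] [TopologicalSpace Y]
    {f : Set (X × Y)} (hf : IsClosed f) : IsClosed (relInv f) :=
  hf.preimage continuous_swap

lemma relInv_relInv {X Y : Type*} (f : Set (X × Y)) : relInv (relInv f) = f := rfl

lemma relInv_relComp {X Y Z : Type*} (g : Set (Y × Z)) (f : Set (X × Y)) :
    relInv (relComp g f) = relComp (relInv f) (relInv g) := by
  ext ⟨z, x⟩
  constructor
  · rintro ⟨y, h1, h2⟩; exact ⟨y, h2, h1⟩
  · rintro ⟨y, h1, h2⟩; exact ⟨y, h2, h1⟩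

/-- Key lemma: if `f` is closed and +proper and `g` is closed, then `g ∘ f` is closed
(on a locally compact space). -/
lemma isClosed_relComp {X : Type*} [TopologicalSpace X] [LocallyCompactSpace X]
    (f g : Set (X × X)) (hf : IsClosed f)
    (hplus : ∀ A : Set X, IsCompact A → IsCompact (relImage f A))
    (hg : IsClosed g) : IsClosed (relComp g f) := by
  classical
  refine isClosed_of_closure_subset ?_
  rintro ⟨x, z⟩ hp
  rw [mem_closure_iff_ultrafilter] at hp
  obtain ⟨U, hSU, hU⟩ := hp
  obtain ⟨K, hK, hKx⟩ := exists_compact_mem_nhds x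
  -- witness function
  set φ : X × X → X := fun p =>
    if h : ∃ y, (p.1, y) ∈ f ∧ (y, p.2) ∈ g then h.choose else x with hφ
  have hwit : ∀ p ∈ relComp g f, (p.1, φ p) ∈ f ∧ (φ p, p.2) ∈ g := by
    intro p hp
    have h : ∃ y, (p.1, y) ∈ f ∧ (y, p.2) ∈ g := hp
    simp only [hφ, dif_pos h]
    exact h.choose_spec
  have hKU : (K ×ˢ (Set.univ : Set X)) ∈ U :=
    hU (prod_mem_nhds hKx univ_mem)
  -- the witnesses land in the compact set f(K)
  have hfK : relImage f K ∈ Ultrafilter.map φ U := by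
    rw [Ultrafilter.mem_map]
    refine mem_of_superset (inter_mem hSU hKU) ?_
    rintro p ⟨hps, hpK⟩
    exact ⟨p.1, hpK.1, (hwit p hps).1⟩
  obtain ⟨y, hyK, hy⟩ := (hplus K hK).ultrafilter_le_nhds (Ultrafilter.map φ U)
    (le_principal_iff.mpr hfK)
  -- limits
  have htx : Filter.Tendsto Prod.fst (U : Filter (X × X)) (𝓝 x) :=
    (continuous_fst.tendsto (x, z)).mono_left hU
  have htz : Filter.Tendsto Prod.snd (U : Filter (X × X)) (𝓝 z) :=
    (continuous_snd.tendsto (x, z)).mono_left hU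
  have hty : Filter.Tendsto φ (U : Filter (X × X)) (𝓝 y) := hy
  have hxy : (x, y) ∈ f := by
    refine hf.mem_of_tendsto (htx.prodMk_nhds hty) ?_
    exact mem_of_superset hSU (fun p hp => (hwit p hp).1)
  have hyz : (y, z) ∈ g := by
    refine hg.mem_of_tendsto (hty.prodMk_nhds htz) ?_
    exact mem_of_superset hSU (fun p hp => (hwit p hp).2)
  exact ⟨y, hxy, hyz⟩

/-- For a +proper closed relation `f` on a locally compact, σ-compact
Hausdorff space, `𝒢f = f ∪ 𝒢f ∘ f`; and if moreover `f` is proper (i.e. `f⁻¹` is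
also +proper) then `𝒢f = f ∪ f ∘ 𝒢f`. -/
theorem gRel_eq_union_comp
    {X : Type*} [TopologicalSpace X] [LocallyCompactSpace X]
    [SigmaCompactSpace X] [T2Space X]
    (f : Set (X × X)) (hf : IsClosed f)
    (hplus : ∀ A : Set X, IsCompact A → IsCompact (relImage f A)) :
    gRel f = f ∪ relComp (gRel f) f ∧
      ((∀ A : Set X, IsCompact A → IsCompact (relImage (relInv f) A)) →
        gRel f = f ∪ relComp f (gRel f)) := by
  have hsub := subset_gRel f
  have hcl := isClosed_gRel f
  have htr := relTrans_gRel f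
  constructor
  · apply Set.Subset.antisymm
    · -- 𝒢f ⊆ f ∪ 𝒢f∘f : the RHS is closed, transitive, contains f
      refine gRel_min (Set.subset_union_left) ?_ ?_
      · exact hf.union (isClosed_relComp f (gRel f) hf hplus hcl)
      · rintro x y z (hxy | ⟨w, hxw, hwy⟩) (hyz | ⟨w', hyw', hw'z⟩)
        · exact Or.inr ⟨y, hxy, hsub hyz⟩
        · exact Or.inr ⟨y, hxy, htr _ _ _ (hsub hyw') hw'z⟩
        · exact Or.inr ⟨w, hxw, htr _ _ _ hwy (hsub hyz)⟩
        · exact Or.inr ⟨w, hxw, htr _ _ _ hwy (htr _ _ _ (hsub hyw') hw'z)⟩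
    · rintro p (hp | ⟨w, h1, h2⟩)
      · exact hsub hp
      · exact htr _ _ _ (hsub h1) h2
  · intro hplusInv
    apply Set.Subset.antisymm
    · refine gRel_min (Set.subset_union_left) ?_ ?_
      · refine hf.union ?_
        have : IsClosed (relComp (relInv (gRel f)) (relInv f)) :=
          isClosed_relComp (relInv f) (relInv (gRel f)) (isClosed_relInv hf)
            hplusInv (isClosed_relInv hcl)
        have h2 : IsClosed (relInv (relComp (relInv (gRel f)) (relInv f))) :=
          isClosed_relInv this
        rwa [← relInv_relComp, relInv_relInv] at h2
      · rintro x y z (hxy | ⟨w, hxw, hwy⟩) (hyz | ⟨w', hyw', hw'z⟩)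
        · exact Or.inr ⟨y, hsub hxy, hyz⟩
        · exact Or.inr ⟨w', htr _ _ _ (hsub hxy) hyw', hw'z⟩
        · exact Or.inr ⟨y, htr _ _ _ hxw (hsub hwy), hyz⟩
        · exact Or.inr ⟨w', htr _ _ _ hxw (htr _ _ _ (hsub hwy) hyw'), hw'z⟩
    · rintro p (hp | ⟨w, h1, h2⟩)
      · exact hsub hp
      · exact htr _ _ _ h1 (hsub h2)
end

section
/- Let f be a closed relation on a locally compact, σ-compact Hausdorff space X. The following are equivalent: (a) f is +proper; (b) for every compact Hausdorff space X̂ and every topological embedding j : X → X̂ with j(X) open and dense, the closure f̂ of (j × j)(f) in X̂ × X̂ satisfies f̂(j(X)) ⊆ j(X); (c) there exist a compact Hausdorff space X̂ and a topological embedding j : X → X̂ with j(X) open and dense such that the closure f̂ of (j × j)(f) satisfies f̂(j(X)) ⊆ j(X). -/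
/-- `Xh` (with embedding `j`) is a proper compactification of `X`: `Xh` is compact
Hausdorff and `j` is a topological embedding with open dense image. -/
def IsProperCompactification (X : Type u) [TopologicalSpace X]
    (Xh : Type u) [TopologicalSpace Xh] (j : X → Xh) : Prop :=
  CompactSpace Xh ∧ T2Space Xh ∧ Topology.IsEmbedding j ∧
    IsOpen (Set.range j) ∧ Dense (Set.range j)

/-- The closure `f̂` of `(j × j)(f)` in `Xh × Xh` maps the copy of `X` into itself:
`f̂(j(X)) ⊆ j(X)`. -/
def HatMapsIntoX {X : Type u} [TopologicalSpace X] (f : Set (X × X))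
    (Xh : Type u) [TopologicalSpace Xh] (j : X → Xh) : Prop :=
  relImage (closure (Prod.map j j '' f)) (Set.range j) ⊆ Set.range j

section Aux

variable {X : Type u} [TopologicalSpace X]

lemma relImage_mono {f : Set (X × X)} {A B : Set X} (h : A ⊆ B) :
    relImage f A ⊆ relImage f B := fun y ⟨x, hx, hxy⟩ => ⟨x, h hx, hxy⟩

lemma relImage_eq_snd_image (f : Set (X × X)) (A : Set X) :
    relImage f A = Prod.snd '' (f ∩ A ×ˢ (Set.univ : Set X)) := by
  ext y
  constructor
  · rintro ⟨x, hx, hxy⟩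
    exact ⟨(x, y), ⟨hxy, hx, trivial⟩, rfl⟩
  · rintro ⟨⟨x, y'⟩, ⟨hxy, hx, -⟩, rfl⟩
    exact ⟨x, hx, hxy⟩

/-- (a) → (b) -/
lemma aux_ab [T2Space X] [LocallyCompactSpace X] {f : Set (X × X)}
    (hprop : ∀ A : Set X, IsCompact A → IsCompact (relImage f A))
    (Xh : Type u) (t : TopologicalSpace Xh) (j : X → Xh)
    (hc : @IsProperCompactification X _ Xh t j) : @HatMapsIntoX X _ f Xh t j := by
  obtain ⟨hcomp, ht2, hemb, hopen, hdense⟩ := hc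
  have hoe : Topology.IsOpenEmbedding j := ⟨hemb, hopen⟩
  rintro yh ⟨xh, ⟨x, rfl⟩, hxy⟩
  -- pick a compact neighborhood K of x
  obtain ⟨K, hKmem, -, hKc⟩ := local_compact_nhds (x := x) (n := Set.univ)
    Filter.univ_mem
  -- f(K) is compact, so j '' f(K) is closed in Xh
  have hfK : IsCompact (relImage f K) := hprop K hKc
  have hjfK : IsCompact (j '' relImage f K) := hfK.image hemb.continuous
  have hjfKclosed : IsClosed (j '' relImage f K) := hjfK.isClosed
  -- show yh ∈ closure (j '' relImage f K)
  have hyh : yh ∈ closure (j '' relImage f K) := by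
    rw [mem_closure_iff]
    intro V hV hyV
    -- neighborhood of (j x, yh) : (j '' interior K) ×ˢ V
    have hU : IsOpen ((j '' interior K) ×ˢ V) :=
      (hoe.isOpenMap _ isOpen_interior).prod hV
    have hmemU : (j x, yh) ∈ (j '' interior K) ×ˢ V :=
      ⟨⟨x, mem_interior_iff_mem_nhds.mpr hKmem, rfl⟩, hyV⟩
    have := mem_closure_iff.mp hxy _ hU hmemU
    obtain ⟨⟨ah, bh⟩, ⟨hja, hbV⟩, ⟨a, b⟩, hab, heq⟩ := this
    have heqa : j a = ah := congrArg Prod.fst heq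
    have heqb : j b = bh := congrArg Prod.snd heq
    obtain ⟨a', ha', hja'⟩ := hja
    have haK : a ∈ K := by
      have : a' = a := hemb.injective (by rw [hja', heqa])
      exact interior_subset (this ▸ ha')
    refine ⟨bh, hbV, b, ⟨a, haK, hab⟩, heqb⟩
  rw [hjfKclosed.closure_eq] at hyh
  obtain ⟨y, -, rfl⟩ := hyh
  exact ⟨y, rfl⟩

/-- (c) → (a) -/
lemma aux_ca [T2Space X] {f : Set (X × X)} (hf : IsClosed f)
    (Xh : Type u) (t : TopologicalSpace Xh) (j : X → Xh)
    (hc : @IsProperCompactification X _ Xh t j) (hm : @HatMapsIntoX X _ f Xh t j)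
    (A : Set X) (hA : IsCompact A) : IsCompact (relImage f A) := by
  obtain ⟨hcomp, ht2, hemb, hopen, hdense⟩ := hc
  set fh := closure (Prod.map j j '' f) with hfh
  have hfhclosed : IsClosed fh := isClosed_closure
  set B := relImage fh (j '' A) with hB
  have hBcomp : IsCompact B := by
    rw [hB, relImage_eq_snd_image]
    exact (((hA.image hemb.continuous).prod isCompact_univ).inter_left
      hfhclosed).image continuous_snd
  have hBsub : B ⊆ Set.range j := fun y hy =>
    hm (relImage_mono (Set.image_subset_range j A) hy)
  have hK : IsCompact (j ⁻¹' B) :=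
    (hemb.isInducing.isCompact_preimage_iff hBsub).mpr hBcomp
  have hsub : relImage f A ⊆ j ⁻¹' B := by
    rintro y ⟨x, hx, hxy⟩
    exact ⟨j x, ⟨x, hx, rfl⟩, subset_closure ⟨(x, y), hxy, rfl⟩⟩
  have : relImage f A = Prod.snd '' (f ∩ A ×ˢ (j ⁻¹' B)) := by
    ext y
    constructor
    · rintro ⟨x, hx, hxy⟩
      exact ⟨(x, y), ⟨hxy, hx, hsub ⟨x, hx, hxy⟩⟩, rfl⟩
    · rintro ⟨⟨x, y'⟩, ⟨hxy, hx, -⟩, rfl⟩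
      exact ⟨x, hx, hxy⟩
  rw [this]
  exact ((hA.prod hK).inter_left hf).image continuous_snd

/-- existence of a proper compactification -/
lemma aux_exists [T2Space X] [LocallyCompactSpace X] :
    ∃ (Xh : Type u) (t : TopologicalSpace Xh) (j : X → Xh),
      @IsProperCompactification X _ Xh t j := by
  by_cases h : CompactSpace X
  · exact ⟨X, ‹_›, id, h, ‹_›, Topology.IsEmbedding.id,
      by simp [Set.range_id], by simp [Set.range_id, dense_univ]⟩
  · have : NoncompactSpace X := not_compactSpace_iff.mp h
    refine ⟨OnePoint X, inferInstance, (↑), inferInstance, inferInstance,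
      OnePoint.isOpenEmbedding_coe.isEmbedding,
      OnePoint.isOpenEmbedding_coe.isOpen_range, ?_⟩
    exact OnePoint.denseRange_coe

end Aux

/-- For a closed relation `f` on a locally compact, σ-compact Hausdorff
space `X`, the following are equivalent: (a) `f` is +proper; (b) for every proper
compactification `(Xh, j)` of `X`, the closure `f̂` of `(j × j)(f)` satisfies
`f̂(j(X)) ⊆ j(X)`; (c) some proper compactification has this property. -/
theorem plusProper_iff_invariant_compactifications
    {X : Type u} [TopologicalSpace X] [LocallyCompactSpace X]
    [SigmaCompactSpace X] [T2Space X]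
    (f : Set (X × X)) (hf : IsClosed f) :
    ((IsClosed f ∧ ∀ A : Set X, IsCompact A → IsCompact (relImage f A)) ↔
      (∀ (Xh : Type u) (t : TopologicalSpace Xh) (j : X → Xh),
        @IsProperCompactification X _ Xh t j → @HatMapsIntoX X _ f Xh t j)) ∧
    ((∀ (Xh : Type u) (t : TopologicalSpace Xh) (j : X → Xh),
        @IsProperCompactification X _ Xh t j → @HatMapsIntoX X _ f Xh t j) ↔
      (∃ (Xh : Type u) (t : TopologicalSpace Xh) (j : X → Xh),
        @IsProperCompactification X _ Xh t j ∧ @HatMapsIntoX X _ f Xh t j)) := by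
  obtain ⟨Xh0, t0, j0, hc0⟩ := aux_exists (X := X)
  constructor
  · constructor
    · rintro ⟨-, hprop⟩ Xh t j hc
      exact aux_ab hprop Xh t j hc
    · intro hb
      exact ⟨hf, aux_ca hf Xh0 t0 j0 hc0 (hb Xh0 t0 j0 hc0)⟩
  · constructor
    · intro hb
      exact ⟨Xh0, t0, j0, hc0, hb Xh0 t0 j0 hc0⟩
    · rintro ⟨Xh, t, j, hc, hm⟩ Xh' t' j' hc'
      exact aux_ab (aux_ca hf Xh t j hc hm) Xh' t' j' hc'
end

section
/- Let X be a compact Hausdorff space, X₀ ⊆ X a closed subset, F a closed transitive relation on X, and F₀ = F ∩ (X₀ × X₀). Let a ≤ b be real numbers and let L₀ : X₀ → [a,b] be a continuous function such that (x,y) ∈ F₀ implies L₀(x) ≤ L₀(y). Then there exists a continuous function L : X → [a,b] extending L₀ (L restricted to X₀ equals L₀) such that (x,y) ∈ F implies L(x) ≤ L(y). -/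
set_option linter.unusedSectionVars false
set_option linter.unusedVariables false

namespace LyapExt

variable {X : Type*} [TopologicalSpace X]

/-- `S` is decreasing w.r.t. the relation `P`. -/
def DecS (P : Set (X × X)) (S : Set X) : Prop := ∀ ⦃x y⦄, (x, y) ∈ P → y ∈ S → x ∈ S

/-- `S` is increasing w.r.t. the relation `P`. -/
def IncS (P : Set (X × X)) (S : Set X) : Prop := ∀ ⦃x y⦄, (x, y) ∈ P → x ∈ S → y ∈ S

lemma DecS.compl {P : Set (X × X)} {S : Set X} (h : DecS P S) : IncS P Sᶜ :=
  fun x y hxy hx hy => hx (h hxy hy)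

lemma IncS.compl {P : Set (X × X)} {S : Set X} (h : IncS P S) : DecS P Sᶜ :=
  fun x y hxy hy hx => hy (h hxy hx)

/-- Down-set of `S`. -/
def dnSet (P : Set (X × X)) (S : Set X) : Set X := {x | ∃ y ∈ S, (x, y) ∈ P}

/-- Up-set of `S`. -/
def upSet (P : Set (X × X)) (S : Set X) : Set X := {y | ∃ x ∈ S, (x, y) ∈ P}

variable [CompactSpace X] [T2Space X]
variable {P : Set (X × X)} (hPc : IsClosed P) (hPr : ∀ x, (x, x) ∈ P) (hPt : RelTrans P)

include hPc hPr hPt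
set_option linter.unusedSectionVars false

lemma isClosed_dnSet {S : Set X} (hS : IsClosed S) : IsClosed (dnSet P S) := by
  have h1 : IsCompact (P ∩ (Set.univ ×ˢ S)) :=
    (hPc.inter (isClosed_univ.prod hS)).isCompact
  have h2 : dnSet P S = Prod.fst '' (P ∩ (Set.univ ×ˢ S)) := by
    ext x
    constructor
    · rintro ⟨y, hyS, hxy⟩
      exact ⟨(x, y), ⟨hxy, Set.mem_univ _, hyS⟩, rfl⟩
    · rintro ⟨⟨x', y⟩, ⟨hxy, -, hyS⟩, rfl⟩
      exact ⟨y, hyS, hxy⟩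
  rw [h2]
  exact (h1.image continuous_fst).isClosed

lemma isClosed_upSet {S : Set X} (hS : IsClosed S) : IsClosed (upSet P S) := by
  have h1 : IsCompact (P ∩ (S ×ˢ Set.univ)) :=
    (hPc.inter (hS.prod isClosed_univ)).isCompact
  have h2 : upSet P S = Prod.snd '' (P ∩ (S ×ˢ Set.univ)) := by
    ext y
    constructor
    · rintro ⟨x, hxS, hxy⟩
      exact ⟨(x, y), ⟨hxy, hxS, Set.mem_univ _⟩, rfl⟩
    · rintro ⟨⟨x, y'⟩, ⟨hxy, hxS, -⟩, rfl⟩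
      exact ⟨x, hxS, hxy⟩
  rw [h2]
  exact (h1.image continuous_snd).isClosed

lemma decS_dnSet (S : Set X) : DecS P (dnSet P S) := by
  rintro x y hxy ⟨z, hzS, hyz⟩
  exact ⟨z, hzS, hPt _ _ _ hxy hyz⟩

lemma incS_upSet (S : Set X) : IncS P (upSet P S) := by
  rintro x y hxy ⟨z, hzS, hzx⟩
  exact ⟨z, hzS, hPt _ _ _ hzx hxy⟩

/-- Order-normality for a closed preorder on a compact Hausdorff space. -/
lemma order_normal {A B : Set X} (hA : IsClosed A) (hAd : DecS P A)
    (hB : IsClosed B) (hBi : IncS P B) (hd : Disjoint A B) :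
    ∃ V W : Set X, IsOpen V ∧ DecS P V ∧ IsOpen W ∧ IncS P W ∧
      A ⊆ V ∧ B ⊆ W ∧ Disjoint V W := by
  have hBA : B ×ˢ A ⊆ Pᶜ := by
    rintro ⟨b, a⟩ ⟨hb, ha⟩ hba
    exact hd.ne_of_mem (hAd hba ha) hb rfl
  obtain ⟨W₀, V₀, hW₀o, hV₀o, hBW₀, hAV₀, hsub⟩ :=
    generalized_tube_lemma hB.isCompact hA.isCompact hPc.isOpen_compl hBA
  refine ⟨(upSet P V₀ᶜ)ᶜ, (dnSet P W₀ᶜ)ᶜ, (isClosed_upSet hPc hPr hPt hV₀o.isClosed_compl).isOpen_compl,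
    ((incS_upSet hPc hPr hPt V₀ᶜ).compl), (isClosed_dnSet hPc hPr hPt hW₀o.isClosed_compl).isOpen_compl,
    ((decS_dnSet hPc hPr hPt W₀ᶜ).compl), ?_, ?_, ?_⟩
  · intro a ha
    rintro ⟨x, hxV₀, hxa⟩
    exact hxV₀ (hAV₀ (hAd hxa ha))
  · intro b hb
    rintro ⟨y, hyW₀, hby⟩
    exact hyW₀ (hBW₀ (hBi hby hb))
  · rw [Set.disjoint_left]
    intro x hxV hxW
    have hxV₀ : x ∈ V₀ := by
      by_contra h
      exact hxV ⟨x, h, hPr x⟩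
    have hxW₀ : x ∈ W₀ := by
      by_contra h
      exact hxW ⟨x, h, hPr x⟩
    exact hsub (Set.mk_mem_prod hxW₀ hxV₀) (hPr x)

/-- The interpolation step: between a closed decreasing `C` and an open decreasing `u ⊇ C`
one can insert an open decreasing `v` and a closed decreasing `D`. -/
lemma order_step {C u : Set X} (hC : IsClosed C) (hCd : DecS P C)
    (hu : IsOpen u) (hud : DecS P u) (hCu : C ⊆ u) :
    ∃ v D : Set X, IsOpen v ∧ DecS P v ∧ IsClosed D ∧ DecS P D ∧ C ⊆ v ∧ v ⊆ D ∧ D ⊆ u := by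
  obtain ⟨V, W, hVo, hVd, hWo, hWi, hCV, hucW, hVW⟩ :=
    order_normal hPc hPr hPt hC hCd hu.isClosed_compl hud.compl
      (Set.disjoint_compl_right_iff_subset.mpr hCu)
  refine ⟨V, Wᶜ, hVo, hVd, hWo.isClosed_compl, hWi.compl, hCV, ?_, ?_⟩
  · exact Set.subset_compl_iff_disjoint_right.mpr hVW
  · intro x hx
    by_contra h
    exact hx (hucW h)

end LyapExt

open Set Filter TopologicalSpace Topology Filter

namespace LyapExt

/-- A pair of a closed decreasing set `C` and an open decreasing set `U ⊇ C`, together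
with the interpolation property, for the ordered Urysohn lemma. -/
structure OCU {X : Type*} [TopologicalSpace X] (P : Set (X × X)) where
  protected C : Set X
  protected U : Set X
  protected closed_C : IsClosed C
  protected dec_C : DecS P C
  protected open_U : IsOpen U
  protected dec_U : DecS P U
  protected subset : C ⊆ U
  protected hP : ∀ {c u : Set X}, IsClosed c → DecS P c → IsOpen u → DecS P u → c ⊆ u →
    ∃ v D : Set X, IsOpen v ∧ DecS P v ∧ IsClosed D ∧ DecS P D ∧ c ⊆ v ∧ v ⊆ D ∧ D ⊆ u

namespace OCU

variable {X : Type*} [TopologicalSpace X] {P : Set (X × X)}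

private def spec (c : OCU P) := c.hP c.closed_C c.dec_C c.open_U c.dec_U c.subset

/-- Left child. -/
noncomputable def left (c : OCU P) : OCU P where
  C := c.C
  U := c.spec.choose
  closed_C := c.closed_C
  dec_C := c.dec_C
  open_U := c.spec.choose_spec.choose_spec.1
  dec_U := c.spec.choose_spec.choose_spec.2.1
  subset := c.spec.choose_spec.choose_spec.2.2.2.2.1
  hP := c.hP

/-- Right child. -/
noncomputable def right (c : OCU P) : OCU P where
  C := c.spec.choose_spec.choose
  U := c.U
  closed_C := c.spec.choose_spec.choose_spec.2.2.1
  dec_C := c.spec.choose_spec.choose_spec.2.2.2.1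
  open_U := c.open_U
  dec_U := c.dec_U
  subset := c.spec.choose_spec.choose_spec.2.2.2.2.2.2
  hP := c.hP

theorem left_C (c : OCU P) : c.left.C = c.C := rfl

@[simp] theorem right_U (c : OCU P) : c.right.U = c.U := rfl

theorem left_U_subset_right_C (c : OCU P) : c.left.U ⊆ c.right.C :=
  c.spec.choose_spec.choose_spec.2.2.2.2.2.1

theorem left_U_subset (c : OCU P) : c.left.U ⊆ c.U :=
  Subset.trans c.left_U_subset_right_C c.right.subset

theorem subset_right_C (c : OCU P) : c.C ⊆ c.right.C :=
  Subset.trans c.left.subset c.left_U_subset_right_C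

/-- `n`-th approximation to the Urysohn function. -/
noncomputable def approx : ℕ → OCU P → X → ℝ
  | 0, c, x => indicator c.Uᶜ 1 x
  | n + 1, c, x => midpoint ℝ (approx n c.left x) (approx n c.right x)

theorem approx_of_mem_C (c : OCU P) (n : ℕ) {x : X} (hx : x ∈ c.C) : c.approx n x = 0 := by
  induction n generalizing c with
  | zero => exact indicator_of_notMem (fun (hU : x ∈ c.Uᶜ) => hU <| c.subset hx) _
  | succ n ihn =>
    simp only [approx]
    rw [ihn, ihn, midpoint_self]
    exacts [c.subset_right_C hx, hx]

theorem approx_of_nmem_U (c : OCU P) (n : ℕ) {x : X} (hx : x ∉ c.U) : c.approx n x = 1 := by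
  induction n generalizing c with
  | zero =>
    rw [← mem_compl_iff] at hx
    exact indicator_of_mem hx _
  | succ n ihn =>
    simp only [approx]
    rw [ihn, ihn, midpoint_self]
    exacts [hx, fun hU => hx <| c.left_U_subset hU]

theorem approx_nonneg (c : OCU P) (n : ℕ) (x : X) : 0 ≤ c.approx n x := by
  induction n generalizing c with
  | zero => exact indicator_nonneg (fun _ _ => zero_le_one) _
  | succ n ihn =>
    simp only [approx, midpoint_eq_smul_add, invOf_eq_inv]
    refine mul_nonneg (inv_nonneg.2 zero_le_two) (add_nonneg ?_ ?_) <;> apply ihn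

theorem approx_le_one (c : OCU P) (n : ℕ) (x : X) : c.approx n x ≤ 1 := by
  induction n generalizing c with
  | zero => exact indicator_apply_le' (fun _ => le_rfl) fun _ => zero_le_one
  | succ n ihn =>
    simp only [approx, midpoint_eq_smul_add, invOf_eq_inv, smul_eq_mul, ← div_eq_inv_mul]
    have := add_le_add (ihn (left c)) (ihn (right c))
    norm_num at this
    exact Iff.mpr (div_le_one zero_lt_two) this

theorem approx_monotone_rel (c : OCU P) (n : ℕ) {x y : X} (hxy : (x, y) ∈ P) :
    c.approx n x ≤ c.approx n y := by
  induction n generalizing c with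
  | zero =>
    by_cases hx : x ∈ c.Uᶜ
    · have hy : y ∈ c.Uᶜ := fun hyU => hx (c.dec_U hxy hyU)
      simp [approx, indicator_of_mem hx, indicator_of_mem hy]
    · simp only [approx, indicator_of_notMem hx]
      exact indicator_nonneg (fun _ _ => zero_le_one) _
  | succ n ihn =>
    simp only [approx]
    exact midpoint_le_midpoint (ihn c.left) (ihn c.right)

theorem bddAbove_range_approx (c : OCU P) (x : X) : BddAbove (range fun n => c.approx n x) :=
  ⟨1, fun _ ⟨n, hn⟩ => hn ▸ c.approx_le_one n x⟩

theorem approx_le_approx_of_U_sub_C {c₁ c₂ : OCU P} (h : c₁.U ⊆ c₂.C) (n₁ n₂ : ℕ) (x : X) :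
    c₂.approx n₂ x ≤ c₁.approx n₁ x := by
  by_cases hx : x ∈ c₁.U
  · calc
      approx n₂ c₂ x = 0 := approx_of_mem_C _ _ (h hx)
      _ ≤ approx n₁ c₁ x := approx_nonneg _ _ _
  · calc
      approx n₂ c₂ x ≤ 1 := approx_le_one _ _ _
      _ = approx n₁ c₁ x := (approx_of_nmem_U _ _ hx).symm

theorem approx_mem_Icc_right_left (c : OCU P) (n : ℕ) (x : X) :
    c.approx n x ∈ Icc (c.right.approx n x) (c.left.approx n x) := by
  induction' n with n ihn generalizing c
  · constructor
    · exact le_rfl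
    · exact indicator_le_indicator_of_subset (compl_subset_compl.2 c.left_U_subset)
        (fun _ => zero_le_one) _
  · simp only [approx, mem_Icc]
    refine ⟨midpoint_le_midpoint ?_ (ihn _).1, midpoint_le_midpoint (ihn _).2 ?_⟩ <;>
      apply approx_le_approx_of_U_sub_C
    exacts [c.left_U_subset_right_C, c.left_U_subset_right_C]

theorem approx_le_succ (c : OCU P) (n : ℕ) (x : X) : c.approx n x ≤ c.approx (n + 1) x := by
  induction' n with n ihn generalizing c
  · simp only [approx, right_U, right_le_midpoint]
    exact (approx_mem_Icc_right_left c 0 x).2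
  · rw [approx, approx]
    exact midpoint_le_midpoint (ihn _) (ihn _)

theorem approx_mono (c : OCU P) (x : X) : Monotone fun n => c.approx n x :=
  monotone_nat_of_le_succ fun n => c.approx_le_succ n x

/-- The limit function. -/
protected noncomputable def lim (c : OCU P) (x : X) : ℝ :=
  ⨆ n, c.approx n x

theorem tendsto_approx_atTop (c : OCU P) (x : X) :
    Tendsto (fun n => c.approx n x) atTop (𝓝 <| c.lim x) :=
  tendsto_atTop_ciSup (c.approx_mono x) ⟨1, fun _ ⟨_, hn⟩ => hn ▸ c.approx_le_one _ _⟩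

theorem lim_of_mem_C (c : OCU P) (x : X) (h : x ∈ c.C) : c.lim x = 0 := by
  simp only [OCU.lim, approx_of_mem_C, h, ciSup_const]

theorem lim_of_nmem_U (c : OCU P) (x : X) (h : x ∉ c.U) : c.lim x = 1 := by
  simp only [OCU.lim, approx_of_nmem_U c _ h, ciSup_const]

theorem lim_eq_midpoint (c : OCU P) (x : X) :
    c.lim x = midpoint ℝ (c.left.lim x) (c.right.lim x) := by
  refine tendsto_nhds_unique (c.tendsto_approx_atTop x) ((tendsto_add_atTop_iff_nat 1).1 ?_)
  simp only [approx]
  exact (c.left.tendsto_approx_atTop x).midpoint (c.right.tendsto_approx_atTop x)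

theorem approx_le_lim (c : OCU P) (x : X) (n : ℕ) : c.approx n x ≤ c.lim x :=
  le_ciSup (c.bddAbove_range_approx x) _

theorem lim_nonneg (c : OCU P) (x : X) : 0 ≤ c.lim x :=
  (c.approx_nonneg 0 x).trans (c.approx_le_lim x 0)

theorem lim_le_one (c : OCU P) (x : X) : c.lim x ≤ 1 :=
  ciSup_le fun _ => c.approx_le_one _ _

theorem lim_mem_Icc (c : OCU P) (x : X) : c.lim x ∈ Icc (0 : ℝ) 1 :=
  ⟨c.lim_nonneg x, c.lim_le_one x⟩

theorem lim_monotone_rel (c : OCU P) {x y : X} (hxy : (x, y) ∈ P) : c.lim x ≤ c.lim y :=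
  ciSup_le fun n => (c.approx_monotone_rel n hxy).trans (c.approx_le_lim y n)

/-- Continuity of `lim`. -/
theorem continuous_lim (c : OCU P) : Continuous c.lim := by
  obtain ⟨h0, h1234, h1⟩ : 0 < (2⁻¹ : ℝ) ∧ (2⁻¹ : ℝ) < 3 / 4 ∧ (3 / 4 : ℝ) < 1 := by norm_num
  refine
    continuous_iff_continuousAt.2 fun x =>
      (Metric.nhds_basis_closedBall_pow (h0.trans h1234) h1).tendsto_right_iff.2 fun n _ => ?_
  simp only [Metric.mem_closedBall]
  induction' n with n ihn generalizing c
  · filter_upwards with y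
    rw [pow_zero]
    exact Real.dist_le_of_mem_Icc_01 (c.lim_mem_Icc _) (c.lim_mem_Icc _)
  · by_cases hxl : x ∈ c.left.U
    · filter_upwards [IsOpen.mem_nhds c.left.open_U hxl, ihn c.left] with _ hyl hyd
      rw [pow_succ', c.lim_eq_midpoint, c.lim_eq_midpoint,
        c.right.lim_of_mem_C _ (c.left_U_subset_right_C hyl),
        c.right.lim_of_mem_C _ (c.left_U_subset_right_C hxl)]
      refine (dist_midpoint_midpoint_le _ _ _ _).trans ?_
      rw [dist_self, add_zero, div_eq_inv_mul]
      gcongr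
    · replace hxl : x ∈ c.left.right.Cᶜ :=
        compl_subset_compl.2 c.left.right.subset hxl
      filter_upwards [IsOpen.mem_nhds (isOpen_compl_iff.2 c.left.right.closed_C) hxl,
        ihn c.left.right, ihn c.right] with y hyl hydl hydr
      replace hxl : x ∉ c.left.left.U :=
        compl_subset_compl.2 c.left.left_U_subset_right_C hxl
      replace hyl : y ∉ c.left.left.U :=
        compl_subset_compl.2 c.left.left_U_subset_right_C hyl
      simp only [pow_succ, c.lim_eq_midpoint, c.left.lim_eq_midpoint,
        c.left.left.lim_of_nmem_U _ hxl, c.left.left.lim_of_nmem_U _ hyl]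
      refine (dist_midpoint_midpoint_le _ _ _ _).trans ?_
      refine (div_le_div_of_nonneg_right (add_le_add (dist_midpoint_midpoint_le _ _ _ _) le_rfl)
        zero_le_two).trans ?_
      rw [dist_self, zero_add]
      set r := (3 / 4 : ℝ) ^ n
      calc _ ≤ (r / 2 + r) / 2 := by gcongr
        _ = _ := by field_simp; ring

end OCU

end LyapExt

namespace LyapExt

variable {X : Type*} [TopologicalSpace X] [CompactSpace X] [T2Space X]
variable {P : Set (X × X)} (hPc : IsClosed P) (hPr : ∀ x, (x, x) ∈ P) (hPt : RelTrans P)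

include hPc hPr hPt
set_option linter.unusedSectionVars false

/-- Ordered Urysohn lemma: separate a closed decreasing set from a closed increasing set
by a continuous monotone function. -/
lemma urysohn_order {A B : Set X} (hA : IsClosed A) (hAd : DecS P A)
    (hB : IsClosed B) (hBi : IncS P B) (hd : Disjoint A B) :
    ∃ f : X → ℝ, Continuous f ∧ (∀ x y, (x, y) ∈ P → f x ≤ f y) ∧
      (∀ x, f x ∈ Set.Icc (0 : ℝ) 1) ∧ (∀ x ∈ A, f x = 0) ∧ (∀ x ∈ B, f x = 1) := by
  set c : OCU P :=
    { C := A
      U := Bᶜ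
      closed_C := hA
      dec_C := hAd
      open_U := hB.isOpen_compl
      dec_U := hBi.compl
      subset := Set.disjoint_left.1 hd
      hP := fun hc hcd hu hud hcu => order_step hPc hPr hPt hc hcd hu hud hcu }
  exact ⟨c.lim, c.continuous_lim, fun x y hxy => c.lim_monotone_rel hxy,
    c.lim_mem_Icc, fun x hx => c.lim_of_mem_C x hx,
    fun x hx => c.lim_of_nmem_U x (fun h => h hx)⟩

/-- Approximate monotone insertion between a "usc" monotone function and an
"lsc" monotone function. -/
lemma approx_insertion (ψ φ : X → ℝ) (a b : ℝ) (hab : a ≤ b)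
    (hψab : ∀ x, ψ x ∈ Set.Icc a b) (hφab : ∀ x, φ x ∈ Set.Icc a b)
    (hψm : ∀ x y, (x, y) ∈ P → ψ x ≤ ψ y) (hφm : ∀ x y, (x, y) ∈ P → φ x ≤ φ y)
    (hψcl : ∀ c : ℝ, IsClosed {x | c ≤ ψ x}) (hφcl : ∀ c : ℝ, IsClosed {x | φ x ≤ c})
    (hψφ : ∀ x, ψ x ≤ φ x) (ε : ℝ) (hε : 0 < ε) :
    ∃ g : X → ℝ, Continuous g ∧ (∀ x y, (x, y) ∈ P → g x ≤ g y) ∧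
      (∀ x, g x ∈ Set.Icc a b) ∧ (∀ x, ψ x - ε ≤ g x ∧ g x ≤ φ x + ε) := by
  rcases eq_or_lt_of_le hab with rfl | hab'
  · refine ⟨fun _ => a, continuous_const, fun _ _ _ => le_rfl, fun x => ⟨le_rfl, le_rfl⟩, ?_⟩
    intro x
    have h1 := hψab x
    have h2 := hφab x
    constructor
    · linarith [h1.2]
    · linarith [h2.1]
  -- choose the number of levels
  set n : ℕ := max 1 ⌈(b - a) / ε⌉₊ with hn
  have hn1 : 1 ≤ n := le_max_left _ _
  have hn0 : (0 : ℝ) < n := by positivity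
  set d : ℝ := (b - a) / n with hd
  have hd0 : 0 < d := div_pos (by linarith) hn0
  have hdε : d ≤ ε := by
    rw [hd, div_le_iff₀ hn0]
    have : (b - a) / ε ≤ (⌈(b - a) / ε⌉₊ : ℝ) := Nat.le_ceil _
    have h2 : ((⌈(b - a) / ε⌉₊ : ℕ) : ℝ) ≤ (n : ℝ) := by
      exact_mod_cast le_max_right 1 ⌈(b - a) / ε⌉₊
    calc b - a = ((b - a) / ε) * ε := by field_simp
      _ ≤ (n : ℝ) * ε := by nlinarith
      _ = ε * n := by ring
  have hdn : d * n = b - a := by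
    rw [hd]; field_simp
  -- the separating functions
  have hsep : ∀ k : ℕ, ∃ f : X → ℝ, Continuous f ∧ (∀ x y, (x, y) ∈ P → f x ≤ f y) ∧
      (∀ x, f x ∈ Set.Icc (0 : ℝ) 1) ∧
      (∀ x, φ x ≤ a + k * d → f x = 0) ∧ (∀ x, a + (k + 1) * d ≤ ψ x → f x = 1) := by
    intro k
    have hA : IsClosed {x | φ x ≤ a + k * d} := hφcl _
    have hAd : DecS P {x | φ x ≤ a + k * d} := fun x y hxy hy =>
      le_trans (hφm x y hxy) hy
    have hB : IsClosed {x | a + (k + 1) * d ≤ ψ x} := hψcl _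
    have hBi : IncS P {x | a + (k + 1) * d ≤ ψ x} := fun x y hxy hx =>
      le_trans hx (hψm x y hxy)
    have hdisc : Disjoint {x | φ x ≤ a + k * d} {x | a + (k + 1) * d ≤ ψ x} := by
      rw [Set.disjoint_left]
      intro x hx1 hx2
      have := hψφ x
      simp only [Set.mem_setOf_eq] at hx1 hx2
      nlinarith
    obtain ⟨f, hf1, hf2, hf3, hf4, hf5⟩ := urysohn_order hPc hPr hPt hA hAd hB hBi hdisc
    exact ⟨f, hf1, hf2, hf3, fun x hx => hf4 x hx, fun x hx => hf5 x hx⟩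
  choose f hfc hfm hf01 hf0 hf1 using hsep
  refine ⟨fun x => a + d * ∑ k ∈ Finset.range n, f k x, ?_, ?_, ?_, ?_⟩
  · exact continuous_const.add (continuous_const.mul (continuous_finset_sum _ fun k _ => hfc k))
  · intro x y hxy
    dsimp only
    have : ∑ k ∈ Finset.range n, f k x ≤ ∑ k ∈ Finset.range n, f k y :=
      Finset.sum_le_sum fun k _ => hfm k x y hxy
    nlinarith
  · intro x
    dsimp only [Set.mem_Icc]
    have h1 : (0 : ℝ) ≤ ∑ k ∈ Finset.range n, f k x :=
      Finset.sum_nonneg fun k _ => (hf01 k x).1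
    have h2 : ∑ k ∈ Finset.range n, f k x ≤ n := by
      calc ∑ k ∈ Finset.range n, f k x ≤ ∑ _k ∈ Finset.range n, (1 : ℝ) :=
            Finset.sum_le_sum fun k _ => (hf01 k x).2
        _ = n := by simp
    constructor
    · nlinarith
    · nlinarith
  · intro x
    dsimp only
    constructor
    · -- lower bound
      set t : ℝ := (ψ x - a) / d with ht
      have ht0 : 0 ≤ t := div_nonneg (by linarith [(hψab x).1]) hd0.le
      have htn : t ≤ n := by
        rw [ht, div_le_iff₀ hd0]
        have := (hψab x).2
        nlinarith [hdn]
      set m : ℕ := ⌊t⌋₊ with hm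
      have hmn : m ≤ n := by
        have h : (m : ℝ) ≤ (n : ℝ) := le_trans (Nat.floor_le ht0) htn
        exact_mod_cast h
      have hkey : ∀ k ∈ Finset.range m, f k x = 1 := by
        intro k hk
        apply hf1
        have hk' : (k : ℝ) + 1 ≤ m := by
          have := Finset.mem_range.mp hk
          exact_mod_cast this
        have : (m : ℝ) ≤ t := Nat.floor_le ht0
        have htψ : t * d = ψ x - a := by rw [ht]; field_simp
        nlinarith
      have hsum : (m : ℝ) ≤ ∑ k ∈ Finset.range n, f k x := by
        calc (m : ℝ) = ∑ k ∈ Finset.range m, (1 : ℝ) := by simp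
          _ = ∑ k ∈ Finset.range m, f k x := (Finset.sum_congr rfl hkey).symm
          _ ≤ ∑ k ∈ Finset.range n, f k x := by
              apply Finset.sum_le_sum_of_subset_of_nonneg
              · exact Finset.range_subset_range.mpr hmn
              · exact fun k _ _ => (hf01 k x).1
      have htm : t < m + 1 := Nat.lt_floor_add_one t
      have htψ : t * d = ψ x - a := by rw [ht]; field_simp
      have h1 : ψ x - d ≤ a + d * m := by nlinarith
      have : a + d * m ≤ a + d * ∑ k ∈ Finset.range n, f k x := by nlinarith
      linarith [hdε]
    · -- upper bound
      set t : ℝ := (φ x - a) / d with ht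
      have ht0 : 0 ≤ t := div_nonneg (by linarith [(hφab x).1]) hd0.le
      have htn : t ≤ n := by
        rw [ht, div_le_iff₀ hd0]
        have := (hφab x).2
        nlinarith [hdn]
      set m : ℕ := ⌈t⌉₊ with hm
      have hmn : m ≤ n := Nat.ceil_le.mpr htn
      have hkey : ∀ k, m ≤ k → f k x = 0 := by
        intro k hk
        apply hf0
        have h1 : t ≤ (m : ℝ) := Nat.le_ceil t
        have h2 : (m : ℝ) ≤ k := by exact_mod_cast hk
        have htφ : t * d = φ x - a := by rw [ht]; field_simp
        nlinarith
      have hsum : ∑ k ∈ Finset.range n, f k x ≤ m := by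
        calc ∑ k ∈ Finset.range n, f k x
            ≤ ∑ k ∈ Finset.range n, (if k < m then (1 : ℝ) else 0) := by
              apply Finset.sum_le_sum
              intro k _
              by_cases hkm : k < m
              · simp only [hkm, if_true]; exact (hf01 k x).2
              · simp only [hkm, if_false]
                exact le_of_eq (hkey k (not_lt.mp hkm))
          _ = ∑ k ∈ Finset.range n, (if k ∈ Finset.range m then (1 : ℝ) else 0) := by
              apply Finset.sum_congr rfl
              intro k _
              simp [Finset.mem_range]
          _ = ∑ k ∈ Finset.range n ∩ Finset.range m, (1 : ℝ) := by
              rw [Finset.sum_ite_mem]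
          _ ≤ m := by
              rw [Finset.sum_const, nsmul_eq_mul, mul_one]
              have : (Finset.range n ∩ Finset.range m).card ≤ (Finset.range m).card :=
                Finset.card_le_card (Finset.inter_subset_right)
              simp only [Finset.card_range] at this ⊢
              exact_mod_cast this
      have htm : (m : ℝ) < t + 1 := Nat.ceil_lt_add_one ht0
      have htφ : t * d = φ x - a := by rw [ht]; field_simp
      have : a + d * ∑ k ∈ Finset.range n, f k x ≤ a + d * m := by nlinarith
      have h1 : a + d * m ≤ φ x + d := by nlinarith
      linarith [hdε]

end LyapExt

namespace LyapExt

variable {X : Type*} [TopologicalSpace X] [CompactSpace X] [T2Space X]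
variable {P : Set (X × X)} (hPc : IsClosed P) (hPr : ∀ x, (x, x) ∈ P) (hPt : RelTrans P)

include hPc hPr hPt
set_option linter.unusedSectionVars false

/-- Exact monotone insertion. -/
lemma insertion (ψ φ : X → ℝ) (a b : ℝ) (hab : a ≤ b)
    (hψab : ∀ x, ψ x ∈ Set.Icc a b) (hφab : ∀ x, φ x ∈ Set.Icc a b)
    (hψm : ∀ x y, (x, y) ∈ P → ψ x ≤ ψ y) (hφm : ∀ x y, (x, y) ∈ P → φ x ≤ φ y)
    (hψcl : ∀ c : ℝ, IsClosed {x | c ≤ ψ x}) (hφcl : ∀ c : ℝ, IsClosed {x | φ x ≤ c})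
    (hψφ : ∀ x, ψ x ≤ φ x) :
    ∃ f : X → ℝ, Continuous f ∧ (∀ x y, (x, y) ∈ P → f x ≤ f y) ∧
      (∀ x, f x ∈ Set.Icc a b) ∧ (∀ x, ψ x ≤ f x ∧ f x ≤ φ x) := by
  set ε : ℕ → ℝ := fun k => (b - a + 1) * (2⁻¹ : ℝ) ^ k with hεdef
  have hε0 : ∀ k, 0 < ε k := fun k => by
    have h : (0:ℝ) < b - a + 1 := by linarith
    simp only [hεdef]
    exact mul_pos h (pow_pos (by norm_num) k)
  have hεhalf : ∀ k, ε (k + 1) = ε k / 2 := fun k => by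
    simp only [hεdef, pow_succ]
    ring
  set props : ℕ → (X → ℝ) → Prop := fun n g =>
    Continuous g ∧ (∀ x y, (x, y) ∈ P → g x ≤ g y) ∧ (∀ x, g x ∈ Set.Icc a b) ∧
      ∀ x, ψ x - ε n ≤ g x ∧ g x ≤ φ x + ε n with hpropsdef
  have base : props 0 (fun _ => a) := by
    refine ⟨continuous_const, fun _ _ _ => le_rfl, fun _ => ⟨le_rfl, hab⟩, fun x => ⟨?_, ?_⟩⟩
    · have h := (hψab x).2
      have : ε 0 = b - a + 1 := by simp [hεdef]
      linarith
    · have h := (hφab x).1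
      have : ε 0 = b - a + 1 := by simp [hεdef]
      linarith
  have step : ∀ n (g : X → ℝ), props n g →
      ∃ g', props (n + 1) g' ∧ ∀ x, |g' x - g x| ≤ ε n + ε (n + 1) := by
    intro n g hg
    obtain ⟨hgc, hgm, hgab, hgb⟩ := hg
    set ψ' : X → ℝ := fun x => max (ψ x) (g x - ε n) with hψ'def
    set φ' : X → ℝ := fun x => min (φ x) (g x + ε n) with hφ'def
    have hψ'ab : ∀ x, ψ' x ∈ Set.Icc a b := fun x =>
      ⟨le_max_of_le_left (hψab x).1,
       max_le (hψab x).2 (by linarith [(hgab x).2, (hε0 n)])⟩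
    have hφ'ab : ∀ x, φ' x ∈ Set.Icc a b := fun x =>
      ⟨le_min (hφab x).1 (by linarith [(hgab x).1, (hε0 n)]),
       min_le_of_left_le (hφab x).2⟩
    have hψ'm : ∀ x y, (x, y) ∈ P → ψ' x ≤ ψ' y := fun x y hxy =>
      max_le_max (hψm x y hxy) (by linarith [hgm x y hxy])
    have hφ'm : ∀ x y, (x, y) ∈ P → φ' x ≤ φ' y := fun x y hxy =>
      min_le_min (hφm x y hxy) (by linarith [hgm x y hxy])
    have hψ'cl : ∀ c : ℝ, IsClosed {x | c ≤ ψ' x} := by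
      intro c
      have : {x | c ≤ ψ' x} = {x | c ≤ ψ x} ∪ {x | c ≤ g x - ε n} := by
        ext x; simp [hψ'def, le_max_iff]
      rw [this]
      exact (hψcl c).union (isClosed_le continuous_const (hgc.sub continuous_const))
    have hφ'cl : ∀ c : ℝ, IsClosed {x | φ' x ≤ c} := by
      intro c
      have : {x | φ' x ≤ c} = {x | φ x ≤ c} ∪ {x | g x + ε n ≤ c} := by
        ext x; simp [hφ'def, min_le_iff]
      rw [this]
      exact (hφcl c).union (isClosed_le (hgc.add continuous_const) continuous_const)
    have hψ'φ' : ∀ x, ψ' x ≤ φ' x := by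
      intro x
      refine max_le (le_min (hψφ x) ?_) (le_min ?_ ?_)
      · linarith [(hgb x).1, (hε0 n)]
      · linarith [(hgb x).2, (hε0 n)]
      · linarith [(hε0 n)]
    obtain ⟨g', hg'c, hg'm, hg'ab, hg'b⟩ :=
      approx_insertion hPc hPr hPt ψ' φ' a b hab hψ'ab hφ'ab hψ'm hφ'm hψ'cl hφ'cl hψ'φ'
        (ε (n + 1)) (hε0 (n + 1))
    refine ⟨g', ⟨hg'c, hg'm, hg'ab, fun x => ⟨?_, ?_⟩⟩, fun x => ?_⟩
    · have h1 := (hg'b x).1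
      have h2 : ψ x ≤ ψ' x := le_max_left _ _
      linarith
    · have h1 := (hg'b x).2
      have h2 : φ' x ≤ φ x := min_le_left _ _
      linarith
    · have h1 := (hg'b x).1
      have h2 := (hg'b x).2
      have h3 : g x - ε n ≤ ψ' x := le_max_right _ _
      have h4 : φ' x ≤ g x + ε n := min_le_right _ _
      rw [abs_le]
      constructor <;> linarith
  -- Build the sequence
  let T : ℕ → Type _ := fun n => {g : X → ℝ // props n g}
  let S : ∀ n, T n := fun n => Nat.rec ⟨fun _ => a, base⟩
    (fun n p => ⟨(step n p.1 p.2).choose, (step n p.1 p.2).choose_spec.1⟩) n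
  have hSstep : ∀ n x, |(S (n + 1)).1 x - (S n).1 x| ≤ ε n + ε (n + 1) := fun n x =>
    (step n (S n).1 (S n).2).choose_spec.2 x
  let F : ℕ → C(X, ℝ) := fun n => ⟨(S n).1, (S n).2.1⟩
  have hdist : ∀ n, dist (F n) (F (n + 1)) ≤ (3 / 2 * (b - a + 1)) * (1 / 2 : ℝ) ^ n := by
    intro n
    have hC : (0:ℝ) ≤ 3 / 2 * (b - a + 1) * (1 / 2 : ℝ) ^ n :=
      mul_nonneg (by nlinarith) (pow_nonneg (by norm_num) n)
    rw [ContinuousMap.dist_le hC]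
    intro x
    have h := hSstep n x
    have : ε n + ε (n + 1) = 3 / 2 * (b - a + 1) * (1 / 2 : ℝ) ^ n := by
      rw [hεhalf n]
      simp only [hεdef, one_div]
      ring
    rw [Real.dist_eq, abs_sub_comm]
    rw [this] at h
    exact h
  have hcauchy : CauchySeq F := cauchySeq_of_le_geometric (1 / 2 : ℝ) _ (by norm_num) hdist
  obtain ⟨L, hL⟩ := cauchySeq_tendsto_of_complete hcauchy
  have hpt : ∀ x, Filter.Tendsto (fun n => (S n).1 x) Filter.atTop (nhds (L x)) := by
    intro x
    exact ((continuous_eval_const x).tendsto L).comp hL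
  have hε_lim : Filter.Tendsto ε Filter.atTop (nhds 0) := by
    rw [hεdef]
    have h2 : Filter.Tendsto (fun k : ℕ => (2⁻¹ : ℝ) ^ k) Filter.atTop (nhds 0) :=
      tendsto_pow_atTop_nhds_zero_of_lt_one (by norm_num) (by norm_num)
    have := h2.const_mul (b - a + 1)
    simpa using this
  refine ⟨L, L.continuous, ?_, ?_, ?_⟩
  · intro x y hxy
    exact le_of_tendsto_of_tendsto' (hpt x) (hpt y) fun n => (S n).2.2.1 x y hxy
  · intro x
    constructor
    · exact ge_of_tendsto' (hpt x) fun n => ((S n).2.2.2.1 x).1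
    · exact le_of_tendsto' (hpt x) fun n => ((S n).2.2.2.1 x).2
  · intro x
    constructor
    · have hlow : Filter.Tendsto (fun n => ψ x - ε n) Filter.atTop (nhds (ψ x)) := by
        have := (tendsto_const_nhds (x := ψ x) (f := Filter.atTop (α := ℕ))).sub hε_lim
        simpa using this
      exact le_of_tendsto_of_tendsto' hlow (hpt x) fun n => ((S n).2.2.2.2 x).1
    · have hup : Filter.Tendsto (fun n => φ x + ε n) Filter.atTop (nhds (φ x)) := by
        have := (tendsto_const_nhds (x := φ x) (f := Filter.atTop (α := ℕ))).add hε_lim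
        simpa using this
      exact le_of_tendsto_of_tendsto' (hpt x) hup fun n => ((S n).2.2.2.2 x).2

end LyapExt

/-- Nachbin extension theorem: Let `X` be compact Hausdorff, `X₀ ⊆ X`
closed, `F` a closed transitive relation on `X` with restriction `F₀ = F ∩ (X₀ × X₀)`,
and `L₀ : X₀ → [a,b]` a continuous Lyapunov function for `F₀`.  Then `L₀` extends to a
continuous Lyapunov function `L : X → [a,b]` for `F`. -/
theorem lyapunov_extension
    {X : Type*} [TopologicalSpace X] [CompactSpace X] [T2Space X]
    (X₀ : Set X) (hX₀ : IsClosed X₀)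
    (F : Set (X × X)) (hF : IsClosed F) (hFt : RelTrans F)
    (a b : ℝ) (hab : a ≤ b)
    (L₀ : X₀ → ℝ) (hL₀c : Continuous L₀)
    (hL₀ab : ∀ z : X₀, L₀ z ∈ Set.Icc a b)
    (hL₀m : ∀ x y : X₀, ((x : X), (y : X)) ∈ F → L₀ x ≤ L₀ y) :
    ∃ L : X → ℝ, Continuous L ∧ (∀ x : X, L x ∈ Set.Icc a b) ∧
      (∀ z : X₀, L z = L₀ z) ∧ (∀ x y : X, (x, y) ∈ F → L x ≤ L y) := by
  classical
  haveI : CompactSpace X₀ := isCompact_iff_compactSpace.mp hX₀.isCompact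
  -- the reflexive closure of F
  set P : Set (X × X) := F ∪ {p | p.1 = p.2} with hPdef
  have hPc : IsClosed P := hF.union (isClosed_eq continuous_fst continuous_snd)
  have hPr : ∀ x : X, (x, x) ∈ P := fun x => Or.inr rfl
  have hPt : RelTrans P := by
    rintro x y z (hxy | hxy) (hyz | hyz)
    · exact Or.inl (hFt x y z hxy hyz)
    · simp only [Set.mem_setOf_eq] at hyz
      exact Or.inl (hyz ▸ hxy)
    · simp only [Set.mem_setOf_eq] at hxy
      exact Or.inl (hxy ▸ hyz)
    · simp only [Set.mem_setOf_eq] at hxy hyz ⊢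
      exact Or.inr (hxy.trans hyz)
  have hPm : ∀ x y : X₀, ((x : X), (y : X)) ∈ P → L₀ x ≤ L₀ y := by
    rintro x y (h | h)
    · exact hL₀m x y h
    · simp only [Set.mem_setOf_eq] at h
      rw [Subtype.ext h]
  -- lower and upper envelopes
  set ψ : X → ℝ := fun x => sSup (insert a (L₀ '' {z : X₀ | ((z : X), x) ∈ P})) with hψdef
  set φ : X → ℝ := fun x => sInf (insert b (L₀ '' {z : X₀ | (x, (z : X)) ∈ P})) with hφdef
  have hbddψ : ∀ x : X, BddAbove (insert a (L₀ '' {z : X₀ | ((z : X), x) ∈ P})) := by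
    intro x
    refine ⟨b, ?_⟩
    rintro t (rfl | ⟨z, -, rfl⟩)
    · exact hab
    · exact (hL₀ab z).2
  have hbddφ : ∀ x : X, BddBelow (insert b (L₀ '' {z : X₀ | (x, (z : X)) ∈ P})) := by
    intro x
    refine ⟨a, ?_⟩
    rintro t (rfl | ⟨z, -, rfl⟩)
    · exact hab
    · exact (hL₀ab z).1
  have hψab : ∀ x, ψ x ∈ Set.Icc a b := by
    intro x
    constructor
    · exact le_csSup (hbddψ x) (Set.mem_insert _ _)
    · apply csSup_le (Set.insert_nonempty _ _)
      rintro t (rfl | ⟨z, -, rfl⟩)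
      · exact hab
      · exact (hL₀ab z).2
  have hφab : ∀ x, φ x ∈ Set.Icc a b := by
    intro x
    constructor
    · apply le_csInf (Set.insert_nonempty _ _)
      rintro t (rfl | ⟨z, -, rfl⟩)
      · exact hab
      · exact (hL₀ab z).1
    · exact csInf_le (hbddφ x) (Set.mem_insert _ _)
  have hψm : ∀ x y, (x, y) ∈ P → ψ x ≤ ψ y := by
    intro x y hxy
    apply csSup_le_csSup (hbddψ y) (Set.insert_nonempty _ _)
    rintro t (rfl | ⟨z, hz, rfl⟩)
    · exact Set.mem_insert _ _
    · exact Set.mem_insert_of_mem _ ⟨z, hPt _ _ _ hz hxy, rfl⟩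
  have hφm : ∀ x y, (x, y) ∈ P → φ x ≤ φ y := by
    intro x y hxy
    apply csInf_le_csInf (hbddφ x) (Set.insert_nonempty _ _)
    rintro t (rfl | ⟨z, hz, rfl⟩)
    · exact Set.mem_insert _ _
    · exact Set.mem_insert_of_mem _ ⟨z, hPt _ _ _ hxy hz, rfl⟩
  have hψX₀ : ∀ z : X₀, ψ (z : X) = L₀ z := by
    intro z
    apply le_antisymm
    · apply csSup_le (Set.insert_nonempty _ _)
      rintro t (rfl | ⟨w, hw, rfl⟩)
      · exact (hL₀ab z).1
      · exact hPm w z hw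
    · exact le_csSup (hbddψ _) (Set.mem_insert_of_mem _ ⟨z, hPr _, rfl⟩)
  have hφX₀ : ∀ z : X₀, φ (z : X) = L₀ z := by
    intro z
    apply le_antisymm
    · exact csInf_le (hbddφ _) (Set.mem_insert_of_mem _ ⟨z, hPr _, rfl⟩)
    · apply le_csInf (Set.insert_nonempty _ _)
      rintro t (rfl | ⟨w, hw, rfl⟩)
      · exact (hL₀ab z).2
      · exact hPm z w hw
  have hψφ : ∀ x, ψ x ≤ φ x := by
    intro x
    apply csSup_le (Set.insert_nonempty _ _)
    rintro t (rfl | ⟨z, hz, rfl⟩)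
    · exact (hφab x).1
    · apply le_csInf (Set.insert_nonempty _ _)
      rintro s (rfl | ⟨w, hw, rfl⟩)
      · exact (hL₀ab z).2
      · exact hPm z w (hPt _ _ _ hz hw)
  -- closedness of level sets
  have hψcl : ∀ c : ℝ, IsClosed {x | c ≤ ψ x} := by
    intro c
    by_cases hc : c ≤ a
    · have : {x | c ≤ ψ x} = Set.univ := by
        ext x
        simp only [Set.mem_setOf_eq, Set.mem_univ, iff_true]
        exact hc.trans (hψab x).1
      rw [this]; exact isClosed_univ
    push_neg at hc
    have hKc : IsClosed ((Subtype.val : X₀ → X) '' {z : X₀ | c ≤ L₀ z}) := by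
      have h1 : IsClosed {z : X₀ | c ≤ L₀ z} := isClosed_le continuous_const hL₀c
      exact (h1.isCompact.image continuous_subtype_val).isClosed
    have hT : IsClosed (LyapExt.upSet P ((Subtype.val : X₀ → X) '' {z : X₀ | c ≤ L₀ z})) :=
      LyapExt.isClosed_upSet hPc hPr hPt hKc
    have heq : {x | c ≤ ψ x} =
        LyapExt.upSet P ((Subtype.val : X₀ → X) '' {z : X₀ | c ≤ L₀ z}) := by
      ext x
      simp only [Set.mem_setOf_eq]
      constructor
      · intro hx
        set K : Set X₀ := {z : X₀ | ((z : X), x) ∈ P} with hKdef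
        have hKcl : IsClosed K :=
          hPc.preimage (Continuous.prodMk (continuous_subtype_val) continuous_const)
        have hKne : K.Nonempty := by
          by_contra hne
          rw [Set.not_nonempty_iff_eq_empty] at hne
          simp only [hKdef] at hne
          have heq0 : ψ x = a := by
            simp only [hψdef]
            rw [hne, Set.image_empty]
            rw [insert_empty_eq]
            exact csSup_singleton a
          rw [heq0] at hx
          exact absurd hx (not_le.mpr hc)
        obtain ⟨z₀, hz₀K, hz₀max⟩ := hKcl.isCompact.exists_isMaxOn hKne hL₀c.continuousOn
        have hψle : ψ x ≤ max a (L₀ z₀) := by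
          apply csSup_le (Set.insert_nonempty _ _)
          rintro t (rfl | ⟨w, hw, rfl⟩)
          · exact le_max_left _ _
          · exact le_max_of_le_right (hz₀max hw)
        have hcz₀ : c ≤ L₀ z₀ := by
          rcases le_max_iff.mp (hx.trans hψle) with h | h
          · exact absurd h (not_le.mpr hc)
          · exact h
        exact ⟨(z₀ : X), ⟨z₀, hcz₀, rfl⟩, hz₀K⟩
      · rintro ⟨w, ⟨z, hcz, rfl⟩, hzx⟩
        refine le_trans hcz ?_
        exact le_csSup (hbddψ x) (Set.mem_insert_of_mem _ ⟨z, hzx, rfl⟩)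
    rw [heq]
    exact hT
  have hφcl : ∀ c : ℝ, IsClosed {x | φ x ≤ c} := by
    intro c
    by_cases hc : b ≤ c
    · have : {x | φ x ≤ c} = Set.univ := by
        ext x
        simp only [Set.mem_setOf_eq, Set.mem_univ, iff_true]
        exact (hφab x).2.trans hc
      rw [this]; exact isClosed_univ
    push_neg at hc
    have hKc : IsClosed ((Subtype.val : X₀ → X) '' {z : X₀ | L₀ z ≤ c}) := by
      have h1 : IsClosed {z : X₀ | L₀ z ≤ c} := isClosed_le hL₀c continuous_const
      exact (h1.isCompact.image continuous_subtype_val).isClosed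
    have hT : IsClosed (LyapExt.dnSet P ((Subtype.val : X₀ → X) '' {z : X₀ | L₀ z ≤ c})) :=
      LyapExt.isClosed_dnSet hPc hPr hPt hKc
    have heq : {x | φ x ≤ c} =
        LyapExt.dnSet P ((Subtype.val : X₀ → X) '' {z : X₀ | L₀ z ≤ c}) := by
      ext x
      simp only [Set.mem_setOf_eq]
      constructor
      · intro hx
        set K : Set X₀ := {z : X₀ | (x, (z : X)) ∈ P} with hKdef
        have hKcl : IsClosed K :=
          hPc.preimage (Continuous.prodMk continuous_const continuous_subtype_val)
        have hKne : K.Nonempty := by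
          by_contra hne
          rw [Set.not_nonempty_iff_eq_empty] at hne
          simp only [hKdef] at hne
          have heq0 : φ x = b := by
            simp only [hφdef]
            rw [hne, Set.image_empty]
            rw [insert_empty_eq]
            exact csInf_singleton b
          rw [heq0] at hx
          exact absurd hx (not_le.mpr hc)
        obtain ⟨z₀, hz₀K, hz₀min⟩ := hKcl.isCompact.exists_isMinOn hKne hL₀c.continuousOn
        have hφge : min b (L₀ z₀) ≤ φ x := by
          apply le_csInf (Set.insert_nonempty _ _)
          rintro t (rfl | ⟨w, hw, rfl⟩)
          · exact min_le_left _ _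
          · exact min_le_of_right_le (hz₀min hw)
        have hcz₀ : L₀ z₀ ≤ c := by
          rcases min_le_iff.mp (hφge.trans hx) with h | h
          · exact absurd h (not_le.mpr hc)
          · exact h
        exact ⟨(z₀ : X), ⟨z₀, hcz₀, rfl⟩, hz₀K⟩
      · rintro ⟨w, ⟨z, hcz, rfl⟩, hzx⟩
        refine le_trans ?_ hcz
        exact csInf_le (hbddφ x) (Set.mem_insert_of_mem _ ⟨z, hzx, rfl⟩)
    rw [heq]
    exact hT
  -- apply the insertion theorem
  obtain ⟨f, hfc, hfm, hfab, hfbound⟩ :=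
    LyapExt.insertion hPc hPr hPt ψ φ a b hab hψab hφab hψm hφm hψcl hφcl hψφ
  refine ⟨f, hfc, hfab, ?_, ?_⟩
  · intro z
    apply le_antisymm
    · have := (hfbound (z : X)).2
      rwa [hφX₀ z] at this
    · have := (hfbound (z : X)).1
      rwa [hψX₀ z] at this
  · intro x y hxy
    exact hfm x y (Or.inl hxy)
end

section
/- Let F be a closed transitive relation on a locally compact, σ-compact Hausdorff space X. Let A ⊆ X be a compact set with F(A) ⊆ A, and assume A admits a compact neighborhood U (A is contained in the interior of U) such that F(U) is compact. Then there exists a continuous function L : X → [0,1] with compact support such that (x,y) ∈ F implies L(x) ≤ L(y) and L(x) = 1 for all x ∈ A. -/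
section LyapunovAux

open Set Filter TopologicalSpace Topology

variable {X : Type*} [TopologicalSpace X]

theorem relImage_mono' (F : Set (X × X)) {s t : Set X} (h : s ⊆ t) :
    relImage F s ⊆ relImage F t := fun y ⟨x, hx, hxy⟩ => ⟨x, h hx, hxy⟩

theorem relImage_union' (F : Set (X × X)) (s t : Set X) :
    relImage F (s ∪ t) = relImage F s ∪ relImage F t := by
  ext y
  constructor
  · rintro ⟨x, hx | hx, hxy⟩
    · exact Or.inl ⟨x, hx, hxy⟩
    · exact Or.inr ⟨x, hx, hxy⟩
  · rintro (⟨x, hx, hxy⟩ | ⟨x, hx, hxy⟩)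
    · exact ⟨x, Or.inl hx, hxy⟩
    · exact ⟨x, Or.inr hx, hxy⟩

theorem relImage_relImage' {F : Set (X × X)} (hFt : RelTrans F) (s : Set X) :
    relImage F (relImage F s) ⊆ relImage F s := by
  rintro y ⟨z, ⟨x, hx, hxz⟩, hzy⟩
  exact ⟨x, hx, hFt x z y hxz hzy⟩

/-- If `F` is closed and `relImage F K` is contained in a compact set, then it is compact. -/
theorem relImage_isCompact {F : Set (X × X)} (hF : IsClosed F) {K T : Set X}
    (hK : IsCompact K) (hT : IsCompact T) (hsub : relImage F K ⊆ T) :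
    IsCompact (relImage F K) := by
  have heq : relImage F K = Prod.snd '' (F ∩ K ×ˢ T) := by
    ext y
    constructor
    · rintro ⟨x, hx, hxy⟩
      exact ⟨(x, y), ⟨hxy, hx, hsub ⟨x, hx, hxy⟩⟩, rfl⟩
    · rintro ⟨⟨a, b⟩, ⟨hab, ha, _⟩, rfl⟩
      exact ⟨a, ha, hab⟩
  rw [heq]
  exact (((hK.prod hT).inter_left hF).image continuous_snd)

variable [T2Space X] [LocallyCompactSpace X]

/-- Interpolation: between a forward-invariant compact set and an open set contained in the
interior of a forward-invariant compact set `N`, one can insert a forward-invariant compact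
set having the small set in its interior. -/
theorem fi_interp {F : Set (X × X)} (hF : IsClosed F) (hFt : RelTrans F)
    {N : Set X} (hN : IsCompact N) (hNinv : relImage F N ⊆ N)
    {P₀ u : Set X} (hP : IsCompact P₀) (hPinv : relImage F P₀ ⊆ P₀)
    (hu : IsOpen u) (huN : u ⊆ interior N) (hPu : P₀ ⊆ u) :
    ∃ M, IsCompact M ∧ relImage F M ⊆ M ∧ P₀ ⊆ interior M ∧ M ⊆ u := by
  have huN' : u ⊆ N := huN.trans interior_subset
  -- the set of points of `N` with an image outside `u`
  set S : Set (X × X) := F ∩ N ×ˢ (N \ u) with hS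
  have hScomp : IsCompact S := ((hN.prod (hN.diff hu)).inter_left hF)
  set D : Set X := Prod.fst '' S with hD
  have hDcomp : IsCompact D := hScomp.image continuous_fst
  have hPD : P₀ ⊆ u \ D := by
    intro x hx
    refine ⟨hPu hx, ?_⟩
    rintro ⟨⟨a, b⟩, ⟨hab, _, hb⟩, rfl⟩
    exact hb.2 (hPu (hPinv ⟨a, hx, hab⟩))
  obtain ⟨V, hVcomp, hPV, hVsub⟩ :=
    exists_compact_between hP (hu.sdiff hDcomp.isClosed) hPD
  have hVN : V ⊆ N := fun x hx => huN' (hVsub hx).1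
  have hFVN : relImage F V ⊆ N := (relImage_mono' F hVN).trans hNinv
  have hFVu : relImage F V ⊆ u := by
    rintro y ⟨x, hx, hxy⟩
    by_contra hy
    exact (hVsub hx).2 ⟨(x, y), ⟨hxy, hVN hx, hFVN ⟨x, hx, hxy⟩, hy⟩, rfl⟩
  have hFVcomp : IsCompact (relImage F V) := relImage_isCompact hF hVcomp hN hFVN
  refine ⟨V ∪ relImage F V, hVcomp.union hFVcomp, ?_, ?_, ?_⟩
  · rw [relImage_union' F]
    exact union_subset (fun y hy => Or.inr hy)
      (fun y hy => Or.inr (relImage_relImage' hFt V hy))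
  · exact hPV.trans (interior_mono subset_union_left)
  · exact union_subset (fun x hx => (hVsub hx).1) hFVu

/-- One can insert a forward-invariant *open* set with compact closure. -/
theorem fi_open_insertion {F : Set (X × X)} (hF : IsClosed F) (hFt : RelTrans F)
    {N : Set X} (hN : IsCompact N) (hNinv : relImage F N ⊆ N)
    {c u : Set X} (hc : IsCompact c) (hu : IsOpen u) (huN : u ⊆ interior N)
    (hcu : c ⊆ u) (hFcu : relImage F c ⊆ u) :
    ∃ v, IsOpen v ∧ c ⊆ v ∧ closure v ⊆ u ∧ relImage F v ⊆ v ∧ IsCompact (closure v) ∧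
      v ⊆ interior N := by
  have huN' : u ⊆ N := huN.trans interior_subset
  set c' : Set X := c ∪ relImage F c with hc'
  have hc'comp : IsCompact c' :=
    hc.union (relImage_isCompact hF hc hN ((relImage_mono' F (hcu.trans huN')).trans hNinv))
  have hc'inv : relImage F c' ⊆ c' := by
    rw [hc', relImage_union' F]
    exact union_subset (fun y hy => Or.inr hy)
      (fun y hy => Or.inr (relImage_relImage' hFt c hy))
  have hc'u : c' ⊆ u := union_subset hcu hFcu
  obtain ⟨Q, hQcomp, hQinv, hc'Q, hQu⟩ := fi_interp hF hFt hN hNinv hc'comp hc'inv hu huN hc'u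
  have hQN : interior Q ⊆ interior N := (interior_subset.trans hQu).trans huN
  -- iterate the interpolation
  have step : ∀ s : {s : Set X // IsCompact s ∧ relImage F s ⊆ s ∧ s ⊆ interior Q},
      ∃ t : Set X, (IsCompact t ∧ relImage F t ⊆ t ∧ t ⊆ interior Q) ∧ s.1 ⊆ interior t := by
    rintro ⟨s, hs1, hs2, hs3⟩
    obtain ⟨M, hM1, hM2, hM3, hM4⟩ :=
      fi_interp hF hFt hN hNinv hs1 hs2 isOpen_interior hQN hs3
    exact ⟨M, ⟨hM1, hM2, hM4⟩, hM3⟩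
  let T := {s : Set X // IsCompact s ∧ relImage F s ⊆ s ∧ s ⊆ interior Q}
  let g : T → T := fun s => ⟨(step s).choose, (step s).choose_spec.1⟩
  have hg : ∀ s : T, s.1 ⊆ interior (g s).1 := fun s => (step s).choose_spec.2
  let s0 : T := ⟨c', hc'comp, hc'inv, hc'Q⟩
  let seq : ℕ → T := fun n => g^[n] s0
  have hseq : ∀ n, (seq n).1 ⊆ interior (seq (n + 1)).1 := by
    intro n
    have : seq (n + 1) = g (seq n) := Function.iterate_succ_apply' g n s0
    rw [this]
    exact hg (seq n)
  refine ⟨⋃ n, interior (seq n).1, isOpen_iUnion fun _ => isOpen_interior, ?_, ?_, ?_, ?_, ?_⟩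
  · intro x hx
    exact mem_iUnion.2 ⟨1, hseq 0 (Or.inl hx)⟩
  · have hvQ : (⋃ n, interior (seq n).1) ⊆ interior Q :=
      iUnion_subset fun n => interior_subset.trans (seq n).2.2.2
    calc closure (⋃ n, interior (seq n).1) ⊆ closure (interior Q) := closure_mono hvQ
      _ ⊆ Q := hQcomp.isClosed.closure_subset_iff.2 interior_subset
      _ ⊆ u := hQu
  · rintro y ⟨x, hx, hxy⟩
    obtain ⟨n, hn⟩ := mem_iUnion.1 hx
    exact mem_iUnion.2 ⟨n + 1, hseq n ((seq n).2.2.1 ⟨x, interior_subset hn, hxy⟩)⟩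
  · refine hQcomp.of_isClosed_subset isClosed_closure ?_
    calc closure (⋃ n, interior (seq n).1) ⊆ closure (interior Q) :=
        closure_mono (iUnion_subset fun n => interior_subset.trans (seq n).2.2.2)
      _ ⊆ Q := hQcomp.isClosed.closure_subset_iff.2 interior_subset
  · exact (iUnion_subset fun n => interior_subset.trans (seq n).2.2.2).trans
      (interior_subset.trans hQu |>.trans huN)

/-- Analogue of `Urysohns.CU` where all the open sets in the construction are
forward invariant under the relation `F`. -/
structure FCU (F : Set (X × X)) (N : Set X) where
  protected C : Set X
  protected U : Set X
  protected compact_C : IsCompact C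
  protected open_U : IsOpen U
  protected subset : C ⊆ U
  protected inv_U : relImage F U ⊆ U
  protected U_sub : U ⊆ interior N
  protected hP : ∀ {c u : Set X}, IsCompact c → IsOpen u → u ⊆ interior N → c ⊆ u →
    relImage F c ⊆ u →
    ∃ v, IsOpen v ∧ c ⊆ v ∧ closure v ⊆ u ∧ relImage F v ⊆ v ∧ IsCompact (closure v) ∧
      v ⊆ interior N

namespace FCU

variable {F : Set (X × X)} {N : Set X}

theorem FC_sub_U (c : FCU F N) : relImage F c.C ⊆ c.U :=
  (relImage_mono' F c.subset).trans c.inv_U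

/-- The left child in the Urysohn recursion. -/
noncomputable def left (c : FCU F N) : FCU F N where
  C := c.C
  U := (c.hP c.compact_C c.open_U c.U_sub c.subset c.FC_sub_U).choose
  compact_C := c.compact_C
  open_U := (c.hP c.compact_C c.open_U c.U_sub c.subset c.FC_sub_U).choose_spec.1
  subset := (c.hP c.compact_C c.open_U c.U_sub c.subset c.FC_sub_U).choose_spec.2.1
  inv_U := (c.hP c.compact_C c.open_U c.U_sub c.subset c.FC_sub_U).choose_spec.2.2.2.1
  U_sub := (c.hP c.compact_C c.open_U c.U_sub c.subset c.FC_sub_U).choose_spec.2.2.2.2.2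
  hP := c.hP

/-- The right child in the Urysohn recursion. -/
noncomputable def right (c : FCU F N) : FCU F N where
  C := closure (c.hP c.compact_C c.open_U c.U_sub c.subset c.FC_sub_U).choose
  U := c.U
  compact_C := (c.hP c.compact_C c.open_U c.U_sub c.subset c.FC_sub_U).choose_spec.2.2.2.2.1
  open_U := c.open_U
  subset := (c.hP c.compact_C c.open_U c.U_sub c.subset c.FC_sub_U).choose_spec.2.2.1
  inv_U := c.inv_U
  U_sub := c.U_sub
  hP := c.hP

theorem right_U (c : FCU F N) : c.right.U = c.U := rfl

theorem left_U_subset_right_C (c : FCU F N) : c.left.U ⊆ c.right.C :=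
  subset_closure

theorem left_U_subset (c : FCU F N) : c.left.U ⊆ c.U :=
  Subset.trans c.left_U_subset_right_C c.right.subset

theorem subset_right_C (c : FCU F N) : c.C ⊆ c.right.C :=
  Subset.trans c.left.subset c.left_U_subset_right_C

/-- `n`-th approximation in the Urysohn construction. -/
noncomputable def approx : ℕ → FCU F N → X → ℝ
  | 0, c, x => indicator c.Uᶜ 1 x
  | n + 1, c, x => midpoint ℝ (approx n c.left x) (approx n c.right x)

theorem approx_of_mem_C (c : FCU F N) (n : ℕ) {x : X} (hx : x ∈ c.C) : c.approx n x = 0 := by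
  induction n generalizing c with
  | zero => exact indicator_of_notMem (fun (hU : x ∈ c.Uᶜ) => hU <| c.subset hx) _
  | succ n ihn =>
    simp only [approx]
    rw [ihn, ihn, midpoint_self]
    exacts [c.subset_right_C hx, hx]

theorem approx_of_nmem_U (c : FCU F N) (n : ℕ) {x : X} (hx : x ∉ c.U) : c.approx n x = 1 := by
  induction n generalizing c with
  | zero =>
    rw [← mem_compl_iff] at hx
    exact indicator_of_mem hx _
  | succ n ihn =>
    simp only [approx]
    rw [ihn, ihn, midpoint_self]
    exacts [hx, fun hU => hx <| c.left_U_subset hU]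

theorem approx_nonneg (c : FCU F N) (n : ℕ) (x : X) : 0 ≤ c.approx n x := by
  induction n generalizing c with
  | zero => exact indicator_nonneg (fun _ _ => zero_le_one) _
  | succ n ihn =>
    simp only [approx, midpoint_eq_smul_add, invOf_eq_inv]
    refine mul_nonneg (inv_nonneg.2 zero_le_two) (add_nonneg ?_ ?_) <;> apply ihn

theorem approx_le_one (c : FCU F N) (n : ℕ) (x : X) : c.approx n x ≤ 1 := by
  induction n generalizing c with
  | zero => exact indicator_apply_le' (fun _ => le_rfl) fun _ => zero_le_one
  | succ n ihn =>
    simp only [approx, midpoint_eq_smul_add, invOf_eq_inv, smul_eq_mul, ← div_eq_inv_mul]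
    have := add_le_add (ihn (left c)) (ihn (right c))
    norm_num at this
    exact Iff.mpr (div_le_one zero_lt_two) this

theorem bddAbove_range_approx (c : FCU F N) (x : X) :
    BddAbove (range fun n => c.approx n x) :=
  ⟨1, fun _ ⟨n, hn⟩ => hn ▸ c.approx_le_one n x⟩

theorem approx_le_approx_of_U_sub_C {c₁ c₂ : FCU F N} (h : c₁.U ⊆ c₂.C) (n₁ n₂ : ℕ) (x : X) :
    c₂.approx n₂ x ≤ c₁.approx n₁ x := by
  by_cases hx : x ∈ c₁.U
  · calc
      approx n₂ c₂ x = 0 := approx_of_mem_C _ _ (h hx)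
      _ ≤ approx n₁ c₁ x := approx_nonneg _ _ _
  · calc
      approx n₂ c₂ x ≤ 1 := approx_le_one _ _ _
      _ = approx n₁ c₁ x := (approx_of_nmem_U _ _ hx).symm

theorem approx_mem_Icc_right_left (c : FCU F N) (n : ℕ) (x : X) :
    c.approx n x ∈ Icc (c.right.approx n x) (c.left.approx n x) := by
  induction' n with n ihn generalizing c
  · exact ⟨le_rfl, indicator_le_indicator_of_subset (compl_subset_compl.2 c.left_U_subset)
      (fun _ => zero_le_one) _⟩
  · simp only [approx, mem_Icc]
    refine ⟨midpoint_le_midpoint ?_ (ihn _).1, midpoint_le_midpoint (ihn _).2 ?_⟩ <;>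
      apply approx_le_approx_of_U_sub_C
    exacts [subset_closure, subset_closure]

theorem approx_le_succ (c : FCU F N) (n : ℕ) (x : X) :
    c.approx n x ≤ c.approx (n + 1) x := by
  induction' n with n ihn generalizing c
  · simp only [approx, right_U, right_le_midpoint]
    exact (approx_mem_Icc_right_left c 0 x).2
  · rw [approx, approx]
    exact midpoint_le_midpoint (ihn _) (ihn _)

theorem approx_mono (c : FCU F N) (x : X) : Monotone fun n => c.approx n x :=
  monotone_nat_of_le_succ fun n => c.approx_le_succ n x

/-- The approximations are antitone along the relation `F`. -/
theorem approx_F (c : FCU F N) (n : ℕ) {x y : X} (hxy : (x, y) ∈ F) :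
    c.approx n y ≤ c.approx n x := by
  induction n generalizing c with
  | zero =>
    by_cases hx : x ∈ c.U
    · have hy : y ∈ c.U := c.inv_U ⟨x, hx, hxy⟩
      have hy' : y ∉ c.Uᶜ := by simp [hy]
      have hx' : x ∉ c.Uᶜ := by simp [hx]
      simp only [approx]
      rw [indicator_of_notMem hy', indicator_of_notMem hx']
    · calc c.approx 0 y ≤ 1 := c.approx_le_one 0 y
        _ = c.approx 0 x := (c.approx_of_nmem_U 0 hx).symm
  | succ n ihn =>
    simp only [approx]
    exact midpoint_le_midpoint (ihn c.left) (ihn c.right)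

/-- The limit function of the Urysohn construction. -/
protected noncomputable def lim (c : FCU F N) (x : X) : ℝ :=
  ⨆ n, c.approx n x

theorem tendsto_approx_atTop (c : FCU F N) (x : X) :
    Tendsto (fun n => c.approx n x) atTop (𝓝 <| c.lim x) :=
  tendsto_atTop_ciSup (c.approx_mono x) ⟨1, fun _ ⟨_, hn⟩ => hn ▸ c.approx_le_one _ _⟩

theorem lim_of_mem_C (c : FCU F N) (x : X) (h : x ∈ c.C) : c.lim x = 0 := by
  simp only [FCU.lim, approx_of_mem_C, h, ciSup_const]

theorem lim_of_nmem_U (c : FCU F N) (x : X) (h : x ∉ c.U) : c.lim x = 1 := by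
  simp only [FCU.lim, approx_of_nmem_U c _ h, ciSup_const]

theorem lim_eq_midpoint (c : FCU F N) (x : X) :
    c.lim x = midpoint ℝ (c.left.lim x) (c.right.lim x) := by
  refine tendsto_nhds_unique (c.tendsto_approx_atTop x) ((tendsto_add_atTop_iff_nat 1).1 ?_)
  simp only [approx]
  exact (c.left.tendsto_approx_atTop x).midpoint (c.right.tendsto_approx_atTop x)

theorem approx_le_lim (c : FCU F N) (x : X) (n : ℕ) : c.approx n x ≤ c.lim x :=
  le_ciSup (c.bddAbove_range_approx x) _

theorem lim_nonneg (c : FCU F N) (x : X) : 0 ≤ c.lim x :=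
  (c.approx_nonneg 0 x).trans (c.approx_le_lim x 0)

theorem lim_le_one (c : FCU F N) (x : X) : c.lim x ≤ 1 :=
  ciSup_le fun _ => c.approx_le_one _ _

theorem lim_mem_Icc (c : FCU F N) (x : X) : c.lim x ∈ Icc (0 : ℝ) 1 :=
  ⟨c.lim_nonneg x, c.lim_le_one x⟩

theorem lim_F (c : FCU F N) {x y : X} (hxy : (x, y) ∈ F) : c.lim y ≤ c.lim x :=
  ciSup_mono (c.bddAbove_range_approx x) fun n => c.approx_F n hxy

/-- Continuity of the limit function. -/
theorem continuous_lim (c : FCU F N) : Continuous c.lim := by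
  obtain ⟨h0, h1234, h1⟩ : 0 < (2⁻¹ : ℝ) ∧ (2⁻¹ : ℝ) < 3 / 4 ∧ (3 / 4 : ℝ) < 1 := by norm_num
  refine
    continuous_iff_continuousAt.2 fun x =>
      (Metric.nhds_basis_closedBall_pow (h0.trans h1234) h1).tendsto_right_iff.2 fun n _ => ?_
  simp only [Metric.mem_closedBall]
  induction' n with n ihn generalizing c
  · filter_upwards with y
    rw [pow_zero]
    exact Real.dist_le_of_mem_Icc_01 (c.lim_mem_Icc _) (c.lim_mem_Icc _)
  · by_cases hxl : x ∈ c.left.U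
    · filter_upwards [IsOpen.mem_nhds c.left.open_U hxl, ihn c.left] with _ hyl hyd
      rw [pow_succ', c.lim_eq_midpoint, c.lim_eq_midpoint,
        c.right.lim_of_mem_C _ (c.left_U_subset_right_C hyl),
        c.right.lim_of_mem_C _ (c.left_U_subset_right_C hxl)]
      refine (dist_midpoint_midpoint_le _ _ _ _).trans ?_
      rw [dist_self, add_zero, div_eq_inv_mul]
      gcongr
    · replace hxl : x ∈ c.left.right.Cᶜ :=
        compl_subset_compl.2 c.left.right.subset hxl
      filter_upwards [IsOpen.mem_nhds (isOpen_compl_iff.2 c.left.right.compact_C.isClosed) hxl,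
        ihn c.left.right, ihn c.right] with y hyl hydl hydr
      replace hxl : x ∉ c.left.left.U :=
        compl_subset_compl.2 c.left.left_U_subset_right_C hxl
      replace hyl : y ∉ c.left.left.U :=
        compl_subset_compl.2 c.left.left_U_subset_right_C hyl
      simp only [pow_succ, c.lim_eq_midpoint, c.left.lim_eq_midpoint,
        c.left.left.lim_of_nmem_U _ hxl, c.left.left.lim_of_nmem_U _ hyl]
      refine (dist_midpoint_midpoint_le _ _ _ _).trans ?_
      refine (div_le_div_of_nonneg_right (add_le_add (dist_midpoint_midpoint_le (V := ℝ) _ _ _ _) le_rfl)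
        zero_le_two).trans ?_
      rw [dist_self, zero_add]
      set r := (3 / 4 : ℝ) ^ n
      calc _ ≤ (r / 2 + r) / 2 := by gcongr
        _ = _ := by field_simp; ring

end FCU

end LyapunovAux

/-- Let `F` be a closed transitive relation on a locally compact,
σ-compact Hausdorff space `X`, and `A` a compact `F`-+invariant set admitting a
compact neighborhood `U` with `F(U)` compact.  Then there is a continuous Lyapunov
function `L : X → [0,1]` for `F` with compact support and `L = 1` on `A`. -/
theorem lyapunov_compactSupport
    {X : Type*} [TopologicalSpace X] [LocallyCompactSpace X]
    [SigmaCompactSpace X] [T2Space X]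
    (F : Set (X × X)) (hF : IsClosed F) (hFt : RelTrans F)
    (A : Set X) (hA : IsCompact A) (hAinv : relImage F A ⊆ A)
    (U : Set X) (hU : IsCompact U) (hAU : A ⊆ interior U)
    (hFU : IsCompact (relImage F U)) :
    ∃ L : X → ℝ, Continuous L ∧ HasCompactSupport L ∧
      (∀ x : X, L x ∈ Set.Icc (0:ℝ) 1) ∧
      (∀ x y : X, (x, y) ∈ F → L x ≤ L y) ∧
      (∀ x ∈ A, L x = 1) := by
  
  classical
  -- Step 1: a forward-invariant compact set `N` with `A ⊆ interior N`.
  obtain ⟨V₀, hV₀comp, hAV₀, hV₀U⟩ := exists_compact_between hA isOpen_interior hAU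
  set N : Set X := V₀ ∪ relImage F V₀ with hNdef
  have hFV₀comp : IsCompact (relImage F V₀) :=
    relImage_isCompact hF hV₀comp hFU (relImage_mono' F (hV₀U.trans interior_subset))
  have hNcomp : IsCompact N := hV₀comp.union hFV₀comp
  have hNinv : relImage F N ⊆ N := by
    rw [hNdef, relImage_union' F]
    exact Set.union_subset (fun y hy => Or.inr hy)
      (fun y hy => Or.inr (relImage_relImage' hFt V₀ hy))
  have hAN : A ⊆ interior N := hAV₀.trans (interior_mono Set.subset_union_left)
  -- Step 2: a forward-invariant open set `v₀` with compact closure around `A`.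
  obtain ⟨v₀, hv₀open, hAv₀, hv₀cl, hv₀inv, hv₀comp, hv₀N⟩ :=
    fi_open_insertion hF hFt hNcomp hNinv hA isOpen_interior (le_refl _) hAN (hAinv.trans hAN)
  -- Step 3: the Urysohn-type construction.
  set c : FCU F N :=
    { C := A
      U := v₀
      compact_C := hA
      open_U := hv₀open
      subset := hAv₀
      inv_U := hv₀inv
      U_sub := hv₀N
      hP := fun {c u} hc hu huN hcu hFcu =>
        fi_open_insertion hF hFt hNcomp hNinv hc hu huN hcu hFcu } with hc
  refine ⟨fun x => 1 - c.lim x, continuous_const.sub c.continuous_lim, ?_, ?_, ?_, ?_⟩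
  · apply HasCompactSupport.intro hv₀comp
    intro x hx
    have hx' : x ∉ v₀ := fun h => hx (subset_closure h)
    simp [c.lim_of_nmem_U x hx']
  · intro x
    obtain ⟨h1, h2⟩ := c.lim_mem_Icc x
    simp only [Set.mem_Icc]
    constructor <;> linarith
  · intro x y hxy
    have := c.lim_F hxy
    show 1 - c.lim x ≤ 1 - c.lim y
    linarith
  · intro x hx
    simp [c.lim_of_mem_C x hx]
end
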